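/- The BH index is a fixed point of the FastLSU counting map: #S(r_BH·α/m) = r_BH, i.e., exactly r_BH of the m p-values are strictly smaller than r_BH·α/m. -/

import Mathlib

open scoped Classical

/-- `#S(t)`: the number of elements of the multiset `C` that are strictly less than `t`. -/
noncomputable def countBelow (C : Multiset ℝ) (t : ℝ) : ℕ :=
  (C.filter (fun p => p < t)).card

/-- The `k`-th smallest element (1-indexed order statistic, with multiplicity) of `D`. -/
noncomputable def orderStat (D : Multiset ℝ) (k : ℕ) : ℝ :=
  (D.sort (· ≤ ·)).getD (k - 1) 0

/-- The Benjamini–Hochberg index at level `α`: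
`max {i ∈ {1,…,m} : p_(i) < i·α/m}`, with value `0` if this set is empty. -/
noncomputable def rBH (α : ℝ) (C : Multiset ℝ) : ℕ :=
  ((Finset.Icc 1 C.card).filter
    (fun i => orderStat C i < (i : ℝ) * α / (C.card : ℝ))).sup id


private lemma count_ge_of_lt (L : List ℝ) (hL : L.Pairwise (· ≤ ·)) (k : ℕ)
    (hk1 : 1 ≤ k) (hkm : k ≤ L.length) (t : ℝ) (h : L.getD (k-1) 0 < t) :
    k ≤ (L.filter (fun p => decide (p < t))).length := by
  have hlt : k - 1 < L.length := by omega
  have htake : ∀ x ∈ L.take k, x < t := by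
    intro x hx
    obtain ⟨i, hi⟩ := List.get_of_mem hx
    have hil : (i : ℕ) < L.length := lt_of_lt_of_le (by
      simpa using i.2.trans_le (by simp [List.length_take, min_le_left])) le_rfl
    have hik : (i : ℕ) < k := lt_of_lt_of_le i.2 (by simp [List.length_take, min_le_left])
    have : (L.take k).get i = L.get ⟨i, by omega⟩ := by
      simp [List.getElem_take]
    have hle : L.get ⟨i, by omega⟩ ≤ L.get ⟨k-1, hlt⟩ :=
      hL.rel_get_of_le (by simp [Fin.le_def]; omega)
    have hgd : L.getD (k-1) 0 = L.get ⟨k-1, hlt⟩ := by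
      simp [List.getD_eq_getElem, hlt, List.get_eq_getElem]
    rw [← hi, this]
    exact lt_of_le_of_lt hle (hgd ▸ h)
  have hfe : (L.take k).filter (fun p => decide (p < t)) = L.take k :=
    List.filter_eq_self.2 (fun a ha => by simpa using htake a ha)
  calc k = (L.take k).length := by simp [List.length_take]; omega
    _ = ((L.take k).filter (fun p => decide (p < t))).length := by rw [hfe]
    _ ≤ (L.filter (fun p => decide (p < t))).length := by
        conv_rhs => rw [← List.take_append_drop k L]
        rw [List.filter_append, List.length_append]
        omega

private lemma lt_of_count_ge (L : List ℝ) (hL : L.Pairwise (· ≤ ·)) (k : ℕ) (t : ℝ)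
    (hk1 : 1 ≤ k) (h : k ≤ (L.filter (fun p => decide (p < t))).length) :
    L.getD (k-1) 0 < t := by
  by_contra hc
  push_neg at hc
  have hlen : k ≤ L.length := h.trans (List.length_filter_le _ _)
  have hlt : k - 1 < L.length := by omega
  have hdrop : ∀ x ∈ L.drop (k-1), ¬ x < t := by
    intro x hx
    obtain ⟨i, hi⟩ := List.get_of_mem hx
    have hi2 : (k-1) + (i:ℕ) < L.length := by
      have := i.2; simp [List.length_drop] at this; omega
    have : x = L.get ⟨(k-1) + i, hi2⟩ := by
      rw [← hi]; simp [List.getElem_drop]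
    have hle : L.get ⟨k-1, hlt⟩ ≤ L.get ⟨(k-1)+i, hi2⟩ :=
      hL.rel_get_of_le (by simp [Fin.le_def])
    have hgd : L.getD (k-1) 0 = L.get ⟨k-1, hlt⟩ := by
      simp [List.getD_eq_getElem, hlt, List.get_eq_getElem]
    rw [this]
    exact not_lt.2 (le_trans (hgd ▸ hc) hle)
  have hfd : (L.drop (k-1)).filter (fun p => decide (p < t)) = [] := by
    rw [List.filter_eq_nil_iff]
    intro a ha
    simpa using hdrop a ha
  have : (L.filter (fun p => decide (p < t))).length ≤ k - 1 := by
    conv_lhs => rw [← List.take_append_drop (k-1) L]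
    rw [List.filter_append, hfd, List.length_append]
    simp
    exact (List.length_filter_le _ _).trans (by simp [List.length_take])
  omega

/-- The BH index is a fixed point of the FastLSU counting map:
`#S(r_BH·α/m) = r_BH`, i.e., exactly `r_BH` of the `m` p-values are strictly smaller
than `r_BH·α/m`. -/
theorem rBH_fixedPoint
    (α : ℝ) (hα0 : 0 < α) (hα1 : α < 1)
    (C : Multiset ℝ) (hC : ∀ p ∈ C, 0 ≤ p ∧ p ≤ 1)
    (m : ℕ) (hm : m = C.card) :
    countBelow C ((rBH α C : ℝ) * α / (m : ℝ)) = rBH α C := by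
  set L : List ℝ := C.sort (· ≤ ·) with hLdef
  have hLs : L.Pairwise (· ≤ ·) := C.pairwise_sort _
  have hLC : (L : Multiset ℝ) = C := C.sort_eq _
  have hLlen : L.length = m := by rw [hm, ← hLC]; simp
  have hcb : ∀ t : ℝ, countBelow C t = (L.filter (fun p => decide (p < t))).length := by
    intro t
    unfold countBelow
    rw [← hLC, Multiset.filter_coe, Multiset.coe_card]
  have hos : ∀ k : ℕ, orderStat C k = L.getD (k-1) 0 := fun k => rfl
  set s := ((Finset.Icc 1 C.card).filter
    (fun i => orderStat C i < (i : ℝ) * α / (C.card : ℝ))) with hsdef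
  have hr : rBH α C = s.sup id := rfl
  rcases Nat.eq_zero_or_pos (rBH α C) with h0 | hpos
  · rw [h0]
    simp only [Nat.cast_zero, zero_mul, zero_div]
    rw [hcb]
    simp only [List.length_eq_zero_iff, List.filter_eq_nil_iff]
    intro a ha
    have : (0:ℝ) ≤ a := (hC a (by rw [← hLC]; exact_mod_cast ha)).1
    simpa using this
  · -- r ≥ 1 : r ∈ s
    have hsne : s.Nonempty := by
      by_contra hne
      rw [Finset.not_nonempty_iff_eq_empty] at hne
      rw [hr, hne] at hpos
      simp at hpos
    obtain ⟨i, hi, hieq⟩ := Finset.exists_mem_eq_sup s hsne id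
    have hrs : rBH α C ∈ s := by rw [hr, hieq]; exact hi
    rw [hsdef, Finset.mem_filter, Finset.mem_Icc] at hrs
    obtain ⟨⟨hr1, hrm⟩, hrlt⟩ := hrs
    rw [← hm] at hrm hrlt
    have hm0 : 0 < m := lt_of_lt_of_le hpos hrm
    set t := (rBH α C : ℝ) * α / (m : ℝ) with htdef
    have hge : rBH α C ≤ countBelow C t := by
      rw [hcb]
      exact count_ge_of_lt L hLs (rBH α C) hr1 (by omega) t hrlt
    set k := countBelow C t with hkdef
    have hkm : k ≤ m := by
      rw [hkdef, hcb, ← hLlen]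
      exact List.length_filter_le _ _
    rcases eq_or_lt_of_le hge with heq | hlt
    · exact heq.symm
    · exfalso
      have hk1 : 1 ≤ k := by omega
      have hok : orderStat C k < t := by
        rw [hos]
        exact lt_of_count_ge L hLs k t hk1 (le_of_eq (by rw [hkdef, hcb]))
      have hks : k ∈ s := by
        rw [hsdef, Finset.mem_filter, Finset.mem_Icc, ← hm]
        refine ⟨⟨hk1, hkm⟩, ?_⟩
        refine lt_of_lt_of_le hok ?_
        rw [htdef]
        have hrk : (rBH α C : ℝ) ≤ (k : ℝ) := by exact_mod_cast hlt.le
        gcongr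
      have : k ≤ rBH α C := by
        rw [hr]
        exact Finset.le_sup (f := id) hks
      omega
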